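/- Let ℓ²(ℤ) denote the Hilbert space of square-summable complex sequences indexed by ℤ, and let u be the bilateral shift on ℓ²(ℤ), i.e., the bounded operator satisfying (u f)(k) = f(k − 1) for all f ∈ ℓ²(ℤ) and k ∈ ℤ (equivalently, u e_k = e_{k+1} on the standard orthonormal basis). Then there exists a sequence (q_j) of finite-rank orthogonal projections on ℓ²(ℤ) such that q_j → 1 in the strong operator topology (i.e., q_j f → f for every f ∈ ℓ²(ℤ)) and ‖u·q_j − q_j·u‖ → 0 as j → ∞. -/

import Mathlib

open Filter Topology Real Finset

noncomputable section
namespace BSQD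

local notation "ℋ" => lp (fun _ : ℤ => ℂ) 2
local notation "⟪" x ", " y "⟫" => inner (𝕜 := ℂ) x y

variable {F : Type*} [NormedAddCommGroup F] [InnerProductSpace ℂ F]

lemma helper1 {ι : Type*} (s : Finset ι) (g : ι → F) (c : ι → ℂ)
    (h : ∀ i ∈ s, ∀ j ∈ s, i ≠ j → ⟪g i, g j⟫ = 0) :
    ‖∑ i ∈ s, c i • g i‖ ^ 2 = ∑ i ∈ s, ‖c i‖ ^ 2 * ‖g i‖ ^ 2 := by
  classical
  induction s using Finset.induction_on with
  | empty => simp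
  | @insert a s ha ih =>
    have horth : ⟪c a • g a, ∑ i ∈ s, c i • g i⟫ = 0 := by
      rw [inner_sum]
      refine Finset.sum_eq_zero fun i hi => ?_
      rw [inner_smul_left, inner_smul_right,
        h a (mem_insert_self a s) i (mem_insert_of_mem hi) (fun e => ha (e ▸ hi))]
      ring
    rw [Finset.sum_insert ha, Finset.sum_insert ha, norm_add_sq (𝕜 := ℂ), horth, ih
      (fun i hi j hj hij => h i (mem_insert_of_mem hi) j (mem_insert_of_mem hj) hij),
      norm_smul]
    simp
    ring

lemma helper2 {ι : Type*} (s : Finset ι) (g : ι → F) (x : F) (t : ℝ) (ht : 0 ≤ t)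
    (h : ∀ i ∈ s, ∀ j ∈ s, i ≠ j → ⟪g i, g j⟫ = 0) (hn : ∀ i ∈ s, ‖g i‖ ≤ t) :
    ∑ i ∈ s, ‖⟪g i, x⟫‖ ^ 2 ≤ t ^ 2 * ‖x‖ ^ 2 := by
  classical
  set S : ℝ := ∑ i ∈ s, ‖⟪g i, x⟫‖ ^ 2 with hS
  have hS0 : 0 ≤ S := Finset.sum_nonneg fun i _ => by positivity
  set z : F := ∑ i ∈ s, ⟪g i, x⟫ • g i with hz
  have hzx : ⟪z, x⟫ = (S : ℂ) := by
    rw [hz, sum_inner]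
    rw [hS]
    push_cast
    refine Finset.sum_congr rfl fun i hi => ?_
    rw [inner_smul_left, RCLike.conj_mul]
    norm_cast
  have hznorm : ‖z‖ ^ 2 ≤ t ^ 2 * S := by
    rw [hz, helper1 s g _ h]
    calc ∑ i ∈ s, ‖⟪g i, x⟫‖ ^ 2 * ‖g i‖ ^ 2
        ≤ ∑ i ∈ s, ‖⟪g i, x⟫‖ ^ 2 * t ^ 2 := by
          refine Finset.sum_le_sum fun i hi => ?_
          have := hn i hi
          have : ‖g i‖ ^ 2 ≤ t ^ 2 := by nlinarith [norm_nonneg (g i)]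
          nlinarith [norm_nonneg (⟪g i, x⟫ : ℂ)]
      _ = t ^ 2 * S := by rw [hS, ← Finset.sum_mul]; ring
  have hcs : S ≤ ‖z‖ * ‖x‖ := by
    calc S = ‖(S : ℂ)‖ := by simp [abs_of_nonneg hS0, Complex.norm_real]
      _ = ‖⟪z, x⟫‖ := by rw [hzx]
      _ ≤ ‖z‖ * ‖x‖ := norm_inner_le_norm z x
  rcases eq_or_lt_of_le hS0 with h0 | hSpos
  · rw [← h0]; positivity
  · have key : S * S ≤ (t ^ 2 * ‖x‖ ^ 2) * S := by
      nlinarith [mul_le_mul hcs hcs hS0 (mul_nonneg (norm_nonneg z) (norm_nonneg x)),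
        mul_le_mul_of_nonneg_right hznorm (sq_nonneg ‖x‖)]
    exact le_of_mul_le_mul_right key hSpos


def e (i : ℤ) : ℋ := lp.single 2 i 1

lemma inner_e_left (i : ℤ) (x : ℋ) : ⟪e i, x⟫ = x i := by
  rw [e, lp.inner_single_left]
  simp [RCLike.inner_apply]

lemma e_apply (i j : ℤ) : (e i : ∀ _ : ℤ, ℂ) j = if j = i then 1 else 0 := by
  rw [e, lp.single_apply]
  split_ifs with h <;> simp [h]

lemma inner_e_e (i j : ℤ) : ⟪e i, e j⟫ = if i = j then 1 else 0 := by
  rw [inner_e_left, e_apply]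

lemma norm_e (i : ℤ) : ‖e i‖ = 1 := by
  have h := norm_sq_eq_re_inner (𝕜 := ℂ) (e i)
  rw [inner_e_e, if_pos rfl] at h
  simp at h
  rcases h with h | h
  · exact h
  · nlinarith [norm_nonneg (e i)]

lemma inner_vv (a b c d : ℝ) (i j p r : ℤ) :
    ⟪(a : ℂ) • e i + (b : ℂ) • e j, (c : ℂ) • e p + (d : ℂ) • e r⟫ =
      (((if i = p then a * c else 0) + (if i = r then a * d else 0)
        + (if j = p then b * c else 0) + (if j = r then b * d else 0) : ℝ) : ℂ) := by
  simp only [inner_add_left, inner_add_right, inner_smul_left, inner_smul_right,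
    inner_e_e, Complex.conj_ofReal]
  push_cast
  split_ifs <;> push_cast <;> ring

lemma norm_vv_sq (a b : ℝ) (i j : ℤ) (h : i ≠ j) :
    ‖(a : ℂ) • e i + (b : ℂ) • e j‖ ^ 2 = a ^ 2 + b ^ 2 := by
  have horth : ⟪(a : ℂ) • e i, (b : ℂ) • e j⟫ = 0 := by
    rw [inner_smul_left, inner_smul_right, inner_e_e, if_neg h]
    ring
  rw [norm_add_sq (𝕜 := ℂ), horth, norm_smul, norm_smul, norm_e, norm_e]
  simp [Complex.norm_real, Complex.sq_norm, Complex.normSq_ofReal, mul_pow, sq_abs]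

def θ (n k : ℕ) : ℝ := k * π / (2 * n)

def f (n k : ℕ) : ℋ := (cos (θ n k) : ℂ) • e k + (sin (θ n k) : ℂ) • e (k - n)

lemma f_def (n k : ℕ) :
    f n k = (cos (θ n k) : ℂ) • e k + (sin (θ n k) : ℂ) • e (k - n) := rfl

lemma e_single (i : ℤ) : e i = lp.single 2 i 1 := rfl

lemma inner_f_f (n k l : ℕ) (hk : k < n) (hl : l < n) :
    ⟪f n k, f n l⟫ = if k = l then 1 else 0 := by
  rw [f, f, inner_vv]
  have c2 : ¬((k : ℤ) = (l : ℤ) - n) := by omega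
  have c3 : ¬((k : ℤ) - n = (l : ℤ)) := by omega
  rw [if_neg c2, if_neg c3]
  by_cases hkl : k = l
  · subst hkl
    norm_num
    norm_cast
    nlinarith [sin_sq_add_cos_sq (θ n k)]
  · have c1 : ¬((k : ℤ) = (l : ℤ)) := by omega
    have c4 : ¬((k : ℤ) - n = (l : ℤ) - n) := by omega
    rw [if_neg c1, if_neg c4, if_neg hkl]
    norm_num

lemma norm_f (n k : ℕ) (hk : k < n) : ‖f n k‖ = 1 := by
  have h : ‖f n k‖ ^ 2 = 1 := by
    rw [f, norm_vv_sq _ _ _ _ (by omega)]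
    nlinarith [sin_sq_add_cos_sq (θ n k)]
  nlinarith [norm_nonneg (f n k)]

def q (n : ℕ) : ℋ →L[ℂ] ℋ :=
  ∑ k ∈ Finset.range n, (innerSL ℂ (f n k)).smulRight (f n k)

lemma q_apply (n : ℕ) (x : ℋ) : q n x = ∑ k ∈ Finset.range n, ⟪f n k, x⟫ • f n k := by
  simp [q, ContinuousLinearMap.sum_apply]

lemma inner_f_q (n k : ℕ) (hk : k < n) (x : ℋ) : ⟪f n k, q n x⟫ = ⟪f n k, x⟫ := by
  rw [q_apply, inner_sum]
  rw [Finset.sum_eq_single k]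
  · rw [inner_smul_right, inner_f_f n k k hk hk, if_pos rfl, mul_one]
  · intro l hl hlk
    rw [inner_smul_right, inner_f_f n k l hk (Finset.mem_range.mp hl), if_neg (Ne.symm hlk),
      mul_zero]
  · intro h
    exact absurd (Finset.mem_range.mpr hk) h

lemma q_symm (n : ℕ) (w x : ℋ) : ⟪q n w, x⟫ = ⟪w, q n x⟫ := by
  rw [q_apply, q_apply, sum_inner, inner_sum]
  refine Finset.sum_congr rfl fun k _ => ?_
  rw [inner_smul_left, inner_smul_right, ← inner_conj_symm (f n k) w]
  simp only [Complex.conj_conj]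
  ring

lemma q_idem (n : ℕ) : IsIdempotentElem (q n) := by
  show q n * q n = q n
  refine ContinuousLinearMap.ext fun x => ?_
  simp only [ContinuousLinearMap.mul_apply]
  have h : ∀ k ∈ Finset.range n, ⟪f n k, q n x⟫ • f n k = ⟪f n k, x⟫ • f n k := fun k hk => by
    rw [inner_f_q n k (Finset.mem_range.mp hk)]
  rw [q_apply n (q n x), Finset.sum_congr rfl h, ← q_apply]



lemma f_orth (n : ℕ) : ∀ k ∈ Finset.range n, ∀ l ∈ Finset.range n, k ≠ l → ⟪f n k, f n l⟫ = 0 :=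
  fun k hk l hl hkl => by
    rw [inner_f_f n k l (mem_range.mp hk) (mem_range.mp hl), if_neg hkl]

lemma q_selfAdjoint (n : ℕ) : IsSelfAdjoint (q n) :=
  ContinuousLinearMap.isSelfAdjoint_iff_isSymmetric.mpr fun x y => q_symm n x y

lemma q_finiteDimensional (n : ℕ) : FiniteDimensional ℂ (LinearMap.range (q n).toLinearMap) := by
  have hfin : FiniteDimensional ℂ (Submodule.span ℂ (Set.range fun k : Fin n => f n k)) :=
    FiniteDimensional.span_of_finite ℂ (Set.finite_range _)
  refine Submodule.finiteDimensional_of_le (S₂ := Submodule.span ℂ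
    (Set.range fun k : Fin n => f n k)) ?_
  rintro y ⟨x, rfl⟩
  rw [ContinuousLinearMap.coe_coe, q_apply]
  refine Submodule.sum_mem _ fun k hk => Submodule.smul_mem _ _
    (Submodule.subset_span ⟨⟨k, mem_range.mp hk⟩, rfl⟩)

lemma norm_q_sq (n : ℕ) (x : ℋ) : ‖q n x‖ ^ 2 = ∑ k ∈ Finset.range n, ‖⟪f n k, x⟫‖ ^ 2 := by
  rw [q_apply, helper1 _ _ _ (f_orth n)]
  refine Finset.sum_congr rfl fun k hk => ?_
  rw [norm_f n k (mem_range.mp hk)]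
  ring

lemma bessel_f (n : ℕ) (x : ℋ) : ∑ k ∈ Finset.range n, ‖⟪f n k, x⟫‖ ^ 2 ≤ ‖x‖ ^ 2 := by
  have := helper2 (Finset.range n) (f n) x 1 zero_le_one (f_orth n)
    (fun k hk => le_of_eq (norm_f n k (mem_range.mp hk)))
  simpa using this

lemma q_norm_le (n : ℕ) (x : ℋ) : ‖q n x‖ ≤ ‖x‖ := by
  have h1 := norm_q_sq n x
  have h2 := bessel_f n x
  nlinarith [norm_nonneg (q n x), norm_nonneg x]

section
variable (u : ℋ →L[ℂ] ℋ)

lemma u_e (hu : ∀ (x : ℋ) (k : ℤ), (u x : ∀ _ : ℤ, ℂ) k = x (k - 1)) (i : ℤ) :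
    u (e i) = e (i + 1) := by
  apply lp.ext
  funext k
  have h1 : (u (e i) : ∀ _ : ℤ, ℂ) k = (e i : ∀ _ : ℤ, ℂ) (k - 1) := hu (e i) k
  rw [h1, e_apply, e_apply]
  exact if_congr (by omega) rfl rfl



lemma theta_zero (n : ℕ) : θ n 0 = 0 := by simp [θ]

lemma f_zero (n : ℕ) : f n 0 = e 0 := by
  rw [f_def, theta_zero]
  norm_num

lemma theta_succ_sub (n k : ℕ) (hn : 1 ≤ n) : θ n (k + 1) - θ n k = π / (2 * n) := by
  have h : (n : ℝ) ≠ 0 := Nat.cast_ne_zero.mpr (by omega)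
  rw [θ, θ]
  push_cast
  field_simp
  ring

lemma key_cos (n k : ℕ) (hn : 1 ≤ n) :
    cos (θ n (k + 1)) * cos (θ n k) + sin (θ n (k + 1)) * sin (θ n k) = cos (π / (2 * n)) := by
  rw [← Real.cos_sub, theta_succ_sub n k hn]

lemma sinpos (n : ℕ) (hn : 1 ≤ n) : 0 ≤ sin (π / (2 * n)) := by
  apply sin_nonneg_of_nonneg_of_le_pi
  · positivity
  · apply div_le_self pi_pos.le
    norm_cast
    omega

variable (hu : ∀ (x : ℋ) (k : ℤ), (u x : ∀ _ : ℤ, ℂ) k = x (k - 1))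
include hu

lemma u_f (n k : ℕ) :
    u (f n k) = (cos (θ n k) : ℂ) • e ((k : ℤ) + 1) + (sin (θ n k) : ℂ) • e ((k : ℤ) - n + 1) := by
  rw [f_def, map_add, map_smul, map_smul, u_e u hu, u_e u hu]

lemma quf_interior (n k : ℕ) (hk : k + 1 < n) :
    q n (u (f n k)) = (cos (π / (2 * n)) : ℂ) • f n (k + 1) := by
  have hn : 1 ≤ n := by omega
  rw [q_apply, Finset.sum_eq_single (k + 1)]
  · congr 1
    rw [u_f u hu, f_def, inner_vv]
    rw [if_pos (by push_cast; ring : ((k + 1 : ℕ) : ℤ) = (k : ℤ) + 1),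
      if_neg (by omega : ¬((k + 1 : ℕ) : ℤ) = (k : ℤ) - n + 1),
      if_neg (by omega : ¬((k + 1 : ℕ) : ℤ) - n = (k : ℤ) + 1),
      if_pos (by omega : ((k + 1 : ℕ) : ℤ) - n = (k : ℤ) - n + 1)]
    have := key_cos n k hn
    norm_num
    exact_mod_cast this
  · intro l hl hlk
    have hln := mem_range.mp hl
    rw [u_f u hu, f_def, inner_vv]
    rw [if_neg (by omega : ¬(l : ℤ) = (k : ℤ) + 1),
      if_neg (by omega : ¬(l : ℤ) = (k : ℤ) - n + 1),
      if_neg (by omega : ¬(l : ℤ) - n = (k : ℤ) + 1),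
      if_neg (by omega : ¬(l : ℤ) - n = (k : ℤ) - n + 1)]
    norm_num
  · intro h
    exact absurd (mem_range.mpr hk) h

lemma quf_last (n k : ℕ) (hk : k + 1 = n) :
    q n (u (f n k)) = (sin (θ n k) : ℂ) • e 0 := by
  have hn : 1 ≤ n := by omega
  rw [q_apply, Finset.sum_eq_single 0]
  · rw [u_f u hu, f_def, inner_vv]
    rw [if_neg (by omega : ¬((0 : ℕ) : ℤ) = (k : ℤ) + 1),
      if_pos (by omega : ((0 : ℕ) : ℤ) = (k : ℤ) - n + 1),
      if_neg (by omega : ¬((0 : ℕ) : ℤ) - n = (k : ℤ) + 1),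
      if_neg (by omega : ¬((0 : ℕ) : ℤ) - n = (k : ℤ) - n + 1)]
    simp [theta_zero]
  · intro l hl hl0
    have hln := mem_range.mp hl
    rw [u_f u hu, f_def, inner_vv]
    rw [if_neg (by omega : ¬(l : ℤ) = (k : ℤ) + 1),
      if_neg (by omega : ¬(l : ℤ) = (k : ℤ) - n + 1),
      if_neg (by omega : ¬(l : ℤ) - n = (k : ℤ) + 1),
      if_neg (by omega : ¬(l : ℤ) - n = (k : ℤ) - n + 1)]
    norm_num
  · intro h
    exact absurd (mem_range.mpr (by omega)) h

def G (n k : ℕ) : ℋ := u (f n k) - q n (u (f n k))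

def PG (n k : ℕ) : ℤ := if k + 1 = n then n else (k : ℤ) + 1
def RG (n k : ℕ) : ℤ := if k + 1 = n then n else (k : ℤ) - n + 1
def AG (n k : ℕ) : ℝ :=
  if k + 1 = n then cos (θ n k) else cos (θ n k) - cos (π / (2 * n)) * cos (θ n (k + 1))
def BG (n k : ℕ) : ℝ :=
  if k + 1 = n then 0 else sin (θ n k) - cos (π / (2 * n)) * sin (θ n (k + 1))

lemma G_repr (n k : ℕ) (hk : k < n) :
    G u n k = (AG n k : ℂ) • e (PG n k) + (BG n k : ℂ) • e (RG n k) := by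
  by_cases h : k + 1 = n
  · rw [G, quf_last u hu n k h, u_f u hu, PG, RG, AG, BG, if_pos h, if_pos h, if_pos h, if_pos h]
    have h1 : (k : ℤ) - n + 1 = 0 := by omega
    have h2 : (k : ℤ) + 1 = (n : ℤ) := by omega
    rw [h1, h2]
    push_cast
    module
  · have h' : k + 1 < n := by omega
    rw [G, quf_interior u hu n k h', u_f u hu, f_def, PG, RG, AG, BG,
      if_neg h, if_neg h, if_neg h, if_neg h]
    have h1 : ((k + 1 : ℕ) : ℤ) = (k : ℤ) + 1 := by push_cast; ring
    rw [h1, show (k : ℤ) + 1 - (n : ℤ) = (k : ℤ) - n + 1 from by ring]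
    push_cast
    module

lemma G_norm_sq (n k : ℕ) (hn : 1 ≤ n) (hk : k < n) :
    ‖G u n k‖ ^ 2 = sin (π / (2 * n)) ^ 2 := by
  rw [G_repr u hu n k hk]
  by_cases h : k + 1 = n
  · rw [AG, BG, PG, RG, if_pos h, if_pos h, if_pos h, if_pos h]
    have hv : ((cos (θ n k) : ℝ) : ℂ) • e (n : ℤ) + ((0 : ℝ) : ℂ) • e (n : ℤ)
        = ((cos (θ n k) : ℝ) : ℂ) • e (n : ℤ) := by norm_num
    rw [hv, norm_smul, norm_e, mul_one, Complex.norm_real, Real.norm_eq_abs, sq_abs]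
    have hθ : θ n k = π / 2 - π / (2 * n) := by
      have hne : (n : ℝ) ≠ 0 := Nat.cast_ne_zero.mpr (by omega)
      rw [θ]
      have : (k : ℝ) = (n : ℝ) - 1 := by
        have : (k : ℤ) = (n : ℤ) - 1 := by omega
        exact_mod_cast this
      rw [this]
      field_simp
    rw [hθ, cos_pi_div_two_sub]
  · rw [AG, BG, PG, RG, if_neg h, if_neg h, if_neg h, if_neg h,
      norm_vv_sq _ _ _ _ (by omega)]
    have key := key_cos n k hn
    linear_combination sin_sq_add_cos_sq (θ n k)
      + cos (π / (2 * (n : ℝ))) ^ 2 * sin_sq_add_cos_sq (θ n (k + 1))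
      - 2 * cos (π / (2 * (n : ℝ))) * key - sin_sq_add_cos_sq (π / (2 * (n : ℝ)))

lemma G_orth (n : ℕ) (hn : 1 ≤ n) (k l : ℕ) (hk : k < n) (hl : l < n) (hkl : k ≠ l) :
    ⟪G u n k, G u n l⟫ = 0 := by
  rw [G_repr u hu n k hk, G_repr u hu n l hl, inner_vv]
  have hPP : PG n k ≠ PG n l := by unfold PG; split_ifs <;> omega
  have hPR : PG n k ≠ RG n l := by unfold PG RG; split_ifs <;> omega
  have hRP : RG n k ≠ PG n l := by unfold RG PG; split_ifs <;> omega
  have hRR : RG n k ≠ RG n l := by unfold RG; split_ifs <;> omega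
  rw [if_neg hPP, if_neg hPR, if_neg hRP, if_neg hRR]
  norm_num

lemma boundA (n : ℕ) (hn : 1 ≤ n) (x : ℋ) :
    ‖u (q n x) - q n (u (q n x))‖ ≤ sin (π / (2 * n)) * ‖x‖ := by
  have hrw : u (q n x) - q n (u (q n x)) = ∑ k ∈ range n, ⟪f n k, x⟫ • G u n k := by
    conv_lhs => rw [q_apply, map_sum]
    simp only [map_smul]
    rw [map_sum]
    simp only [map_smul, G, smul_sub]
    rw [← Finset.sum_sub_distrib]
  rw [hrw]
  have h1 : ‖∑ k ∈ range n, ⟪f n k, x⟫ • G u n k‖ ^ 2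
      = ∑ k ∈ range n, ‖⟪f n k, x⟫‖ ^ 2 * ‖G u n k‖ ^ 2 :=
    helper1 _ _ _ (fun k hk l hl hkl =>
      G_orth u hu n hn k l (mem_range.mp hk) (mem_range.mp hl) hkl)
  have h2 : ∑ k ∈ range n, ‖⟪f n k, x⟫‖ ^ 2 * ‖G u n k‖ ^ 2
      = sin (π / (2 * n)) ^ 2 * ∑ k ∈ range n, ‖⟪f n k, x⟫‖ ^ 2 := by
    rw [Finset.mul_sum]
    refine Finset.sum_congr rfl fun k hk => ?_
    rw [G_norm_sq u hu n k hn (mem_range.mp hk)]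
    ring
  have h3 := bessel_f n x
  have hs := sinpos n hn
  nlinarith [norm_nonneg (∑ k ∈ range n, ⟪f n k, x⟫ • G u n k), norm_nonneg x,
    mul_nonneg hs (norm_nonneg x), sq_nonneg (sin (π / (2 * n))),
    mul_le_mul_of_nonneg_left h3 (sq_nonneg (sin (π / (2 * n))))]

end


def w (n k : ℕ) : ℋ :=
  (cos (θ n k) : ℂ) • e ((k : ℤ) - 1) + (sin (θ n k) : ℂ) • e ((k : ℤ) - n - 1)

def H (n k : ℕ) : ℋ := w n k - q n (w n k)

section
variable (u : ℋ →L[ℂ] ℋ)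
variable (hu : ∀ (x : ℋ) (k : ℤ), (u x : ∀ _ : ℤ, ℂ) k = x (k - 1))
include hu

lemma inner_f_u (n k : ℕ) (y : ℋ) : ⟪f n k, u y⟫ = ⟪w n k, y⟫ := by
  rw [f_def, w, inner_add_left, inner_add_left, inner_smul_left, inner_smul_left,
    inner_smul_left, inner_smul_left, inner_e_left, inner_e_left, inner_e_left, inner_e_left,
    hu y (k : ℤ), hu y ((k : ℤ) - n)]

end

lemma key_cos' (n k : ℕ) (hn : 1 ≤ n) (hk : 1 ≤ k) :
    cos (θ n (k - 1)) * cos (θ n k) + sin (θ n (k - 1)) * sin (θ n k) = cos (π / (2 * n)) := by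
  have h := key_cos n (k - 1) hn
  rw [Nat.sub_add_cancel hk] at h
  linear_combination h

lemma qw_interior (n k : ℕ) (hk0 : 1 ≤ k) (hk : k < n) :
    q n (w n k) = (cos (π / (2 * n)) : ℂ) • f n (k - 1) := by
  have hn : 1 ≤ n := by omega
  rw [q_apply, Finset.sum_eq_single (k - 1)]
  · congr 1
    rw [f_def, w, inner_vv]
    rw [if_pos (by omega : ((k - 1 : ℕ) : ℤ) = (k : ℤ) - 1),
      if_neg (by omega : ¬((k - 1 : ℕ) : ℤ) = (k : ℤ) - n - 1),
      if_neg (by omega : ¬((k - 1 : ℕ) : ℤ) - n = (k : ℤ) - 1),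
      if_pos (by omega : ((k - 1 : ℕ) : ℤ) - n = (k : ℤ) - n - 1)]
    have key2 := key_cos' n k hn hk0
    norm_num
    exact_mod_cast key2
  · intro l hl hlk
    have hln := mem_range.mp hl
    rw [f_def, w, inner_vv]
    rw [if_neg (by omega : ¬(l : ℤ) = (k : ℤ) - 1),
      if_neg (by omega : ¬(l : ℤ) = (k : ℤ) - n - 1),
      if_neg (by omega : ¬(l : ℤ) - n = (k : ℤ) - 1),
      if_neg (by omega : ¬(l : ℤ) - n = (k : ℤ) - n - 1)]
    norm_num
  · intro h
    exact absurd (mem_range.mpr (by omega)) h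

lemma qw_zero (n : ℕ) (hn : 1 ≤ n) :
    q n (w n 0) = (sin (θ n (n - 1)) : ℂ) • f n (n - 1) := by
  rw [q_apply, Finset.sum_eq_single (n - 1)]
  · congr 1
    rw [f_def, w, inner_vv]
    rw [if_neg (by omega : ¬((n - 1 : ℕ) : ℤ) = ((0 : ℕ) : ℤ) - 1),
      if_neg (by omega : ¬((n - 1 : ℕ) : ℤ) = ((0 : ℕ) : ℤ) - n - 1),
      if_pos (by omega : ((n - 1 : ℕ) : ℤ) - n = ((0 : ℕ) : ℤ) - 1),
      if_neg (by omega : ¬((n - 1 : ℕ) : ℤ) - n = ((0 : ℕ) : ℤ) - n - 1)]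
    simp [theta_zero]
  · intro l hl hlk
    have hln := mem_range.mp hl
    rw [f_def, w, inner_vv]
    rw [if_neg (by omega : ¬(l : ℤ) = ((0 : ℕ) : ℤ) - 1),
      if_neg (by omega : ¬(l : ℤ) = ((0 : ℕ) : ℤ) - n - 1),
      if_neg (by omega : ¬(l : ℤ) - n = ((0 : ℕ) : ℤ) - 1),
      if_neg (by omega : ¬(l : ℤ) - n = ((0 : ℕ) : ℤ) - n - 1)]
    norm_num
  · intro h
    exact absurd (mem_range.mpr (by omega)) h

def PH (n k : ℕ) : ℤ := if k = 0 then (n : ℤ) - 1 else (k : ℤ) - 1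
def RH (n k : ℕ) : ℤ := if k = 0 then -1 else (k : ℤ) - n - 1
def AH (n k : ℕ) : ℝ :=
  if k = 0 then -(sin (θ n (n - 1)) * cos (θ n (n - 1)))
  else cos (θ n k) - cos (π / (2 * n)) * cos (θ n (k - 1))
def BH (n k : ℕ) : ℝ :=
  if k = 0 then 1 - sin (θ n (n - 1)) ^ 2
  else sin (θ n k) - cos (π / (2 * n)) * sin (θ n (k - 1))

lemma H_repr (n k : ℕ) (hn : 1 ≤ n) (hk : k < n) :
    H n k = (AH n k : ℂ) • e (PH n k) + (BH n k : ℂ) • e (RH n k) := by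
  by_cases h : k = 0
  · subst h
    rw [H, qw_zero n hn, w, f_def, PH, RH, AH, BH, if_pos rfl, if_pos rfl, if_pos rfl, if_pos rfl,
      theta_zero]
    rw [show ((n - 1 : ℕ) : ℤ) - (n : ℤ) = -1 from by omega,
      show ((n - 1 : ℕ) : ℤ) = (n : ℤ) - 1 from by omega,
      show ((0 : ℕ) : ℤ) - 1 = -1 from by omega]
    push_cast
    norm_num
    module
  · rw [H, qw_interior n k (by omega) hk, w, f_def, PH, RH, AH, BH,
      if_neg h, if_neg h, if_neg h, if_neg h]
    rw [show ((k - 1 : ℕ) : ℤ) = (k : ℤ) - 1 from by omega,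
      show ((k : ℤ)) - 1 - (n : ℤ) = (k : ℤ) - n - 1 from by ring]
    push_cast
    module

lemma H_norm_sq (n k : ℕ) (hn : 1 ≤ n) (hk : k < n) :
    ‖H n k‖ ^ 2 = sin (π / (2 * n)) ^ 2 := by
  have hθ : θ n (n - 1) = π / 2 - π / (2 * n) := by
    have hne : (n : ℝ) ≠ 0 := Nat.cast_ne_zero.mpr (by omega)
    rw [θ]
    have h1 : ((n - 1 : ℕ) : ℝ) = (n : ℝ) - 1 := by
      have : ((n - 1 : ℕ) : ℤ) = (n : ℤ) - 1 := by omega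
      exact_mod_cast this
    rw [h1]
    field_simp
  rw [H_repr n k hn hk]
  by_cases h : k = 0
  · subst h
    rw [AH, BH, PH, RH, if_pos rfl, if_pos rfl, if_pos rfl, if_pos rfl,
      norm_vv_sq _ _ _ _ (by omega), hθ, sin_pi_div_two_sub, cos_pi_div_two_sub]
    linear_combination (cos (π / (2 * (n : ℝ))) ^ 2 - 1) * sin_sq_add_cos_sq (π / (2 * (n : ℝ)))
  · rw [AH, BH, PH, RH, if_neg h, if_neg h, if_neg h, if_neg h,
      norm_vv_sq _ _ _ _ (by omega)]
    have key2 := key_cos' n k hn (by omega)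
    linear_combination sin_sq_add_cos_sq (θ n k)
      + cos (π / (2 * (n : ℝ))) ^ 2 * sin_sq_add_cos_sq (θ n (k - 1))
      - 2 * cos (π / (2 * (n : ℝ))) * key2 - sin_sq_add_cos_sq (π / (2 * (n : ℝ)))

lemma H_orth (n : ℕ) (hn : 1 ≤ n) (k l : ℕ) (hk : k < n) (hl : l < n) (hkl : k ≠ l) :
    ⟪H n k, H n l⟫ = 0 := by
  rw [H_repr n k hn hk, H_repr n l hn hl, inner_vv]
  have hPP : PH n k ≠ PH n l := by unfold PH; split_ifs <;> omega
  have hPR : PH n k ≠ RH n l := by unfold PH RH; split_ifs <;> omega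
  have hRP : RH n k ≠ PH n l := by unfold RH PH; split_ifs <;> omega
  have hRR : RH n k ≠ RH n l := by unfold RH; split_ifs <;> omega
  rw [if_neg hPP, if_neg hPR, if_neg hRP, if_neg hRR]
  norm_num

section
variable (u : ℋ →L[ℂ] ℋ)
variable (hu : ∀ (x : ℋ) (k : ℤ), (u x : ∀ _ : ℤ, ℂ) k = x (k - 1))
include hu

lemma boundB (n : ℕ) (hn : 1 ≤ n) (x : ℋ) :
    ‖q n (u (x - q n x))‖ ≤ sin (π / (2 * n)) * ‖x‖ := by
  have hrw : q n (u (x - q n x)) = ∑ k ∈ range n, ⟪H n k, x⟫ • f n k := by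
    rw [q_apply]
    refine Finset.sum_congr rfl fun k hk => ?_
    congr 1
    rw [inner_f_u u hu n k, inner_sub_right, ← q_symm, H, inner_sub_left]
  rw [hrw]
  have h1 : ‖∑ k ∈ range n, ⟪H n k, x⟫ • f n k‖ ^ 2
      = ∑ k ∈ range n, ‖⟪H n k, x⟫‖ ^ 2 * ‖f n k‖ ^ 2 := helper1 _ _ _ (f_orth n)
  have h2 : ∑ k ∈ range n, ‖⟪H n k, x⟫‖ ^ 2 * ‖f n k‖ ^ 2
      = ∑ k ∈ range n, ‖⟪H n k, x⟫‖ ^ 2 := by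
    refine Finset.sum_congr rfl fun k hk => ?_
    rw [norm_f n k (mem_range.mp hk)]
    ring
  have h3 : ∑ k ∈ range n, ‖⟪H n k, x⟫‖ ^ 2 ≤ sin (π / (2 * n)) ^ 2 * ‖x‖ ^ 2 := by
    refine helper2 _ _ _ _ (sinpos n hn)
      (fun k hk l hl hkl => H_orth n hn k l (mem_range.mp hk) (mem_range.mp hl) hkl)
      (fun k hk => ?_)
    have := H_norm_sq n k hn (mem_range.mp hk)
    nlinarith [norm_nonneg (H n k), sinpos n hn]
  have hs := sinpos n hn
  nlinarith [norm_nonneg (∑ k ∈ range n, ⟪H n k, x⟫ • f n k), norm_nonneg x,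
    mul_nonneg hs (norm_nonneg x)]

end


section
variable (u : ℋ →L[ℂ] ℋ)
variable (hu : ∀ (x : ℋ) (k : ℤ), (u x : ∀ _ : ℤ, ℂ) k = x (k - 1))

include hu in
lemma comm_bound (n : ℕ) (hn : 1 ≤ n) : ‖u * q n - q n * u‖ ≤ 2 * sin (π / (2 * n)) := by
  refine ContinuousLinearMap.opNorm_le_bound _
    (by nlinarith [sinpos n hn]) fun x => ?_
  have hsplit : (u * q n - q n * u) x
      = (u (q n x) - q n (u (q n x))) - q n (u (x - q n x)) := by
    simp only [ContinuousLinearMap.sub_apply, ContinuousLinearMap.mul_apply, map_sub]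
    abel
  rw [hsplit]
  calc ‖(u (q n x) - q n (u (q n x))) - q n (u (x - q n x))‖
      ≤ ‖u (q n x) - q n (u (q n x))‖ + ‖q n (u (x - q n x))‖ := norm_sub_le _ _
    _ ≤ sin (π / (2 * n)) * ‖x‖ + sin (π / (2 * n)) * ‖x‖ :=
        add_le_add (boundA u hu n hn x) (boundB u hu n hn x)
    _ = 2 * sin (π / (2 * n)) * ‖x‖ := by ring

end

lemma inner_f_e (n l : ℕ) (m : ℤ) :
    ⟪f n l, e m⟫ = (cos (θ n l) : ℂ) * (if (l : ℤ) = m then 1 else 0)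
      + (sin (θ n l) : ℂ) * (if (l : ℤ) - n = m then 1 else 0) := by
  rw [f_def, inner_add_left, inner_smul_left, inner_smul_left, inner_e_e, inner_e_e,
    Complex.conj_ofReal, Complex.conj_ofReal]

lemma q_e_repr_nonneg (m : ℤ) (n : ℕ) (hm : 0 ≤ m) (hmn : m < n) :
    q n (e m) = (cos (θ n m.toNat) : ℂ) • f n m.toNat := by
  rw [q_apply, Finset.sum_eq_single m.toNat]
  · congr 1
    rw [inner_f_e, if_pos (by omega : (m.toNat : ℤ) = m),
      if_neg (by omega : ¬(m.toNat : ℤ) - n = m)]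
    norm_num
  · intro l hl hlk
    have hln := mem_range.mp hl
    rw [inner_f_e, if_neg (by omega : ¬(l : ℤ) = m), if_neg (by omega : ¬(l : ℤ) - n = m)]
    norm_num
  · intro h
    exact absurd (mem_range.mpr (by omega)) h

lemma q_e_repr_neg (m : ℤ) (n : ℕ) (hm : m < 0) (hmn : -m < n) :
    q n (e m) = (sin (θ n (m + n).toNat) : ℂ) • f n (m + n).toNat := by
  rw [q_apply, Finset.sum_eq_single (m + n).toNat]
  · congr 1
    rw [inner_f_e, if_neg (by omega : ¬((m + n).toNat : ℤ) = m),
      if_pos (by omega : ((m + n).toNat : ℤ) - n = m)]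
    norm_num
  · intro l hl hlk
    have hln := mem_range.mp hl
    rw [inner_f_e, if_neg (by omega : ¬(l : ℤ) = m), if_neg (by omega : ¬(l : ℤ) - n = m)]
    norm_num
  · intro h
    exact absurd (mem_range.mpr (by omega)) h

lemma q_e_dist (m : ℤ) (n : ℕ) (hmn : m.natAbs < n) :
    ‖q n (e m) - e m‖ ≤ |sin ((m : ℝ) * π / (2 * n))| := by
  have hn : 1 ≤ n := by omega
  rcases le_or_gt 0 m with hm | hm
  · set k := m.toNat with hk
    have hθeq : θ n k = (m : ℝ) * π / (2 * n) := by
      rw [θ]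
      congr 2
      exact_mod_cast congrArg (Int.cast : ℤ → ℝ) (by omega : (k : ℤ) = m)
    have hd : q n (e m) - e m
        = ((cos (θ n k) ^ 2 - 1 : ℝ) : ℂ) • e m + ((cos (θ n k) * sin (θ n k) : ℝ) : ℂ) • e (m - n) := by
      rw [q_e_repr_nonneg m n hm (by omega), f_def,
        show ((k : ℕ) : ℤ) = m from by omega]
      push_cast [-Complex.ofReal_sin, -Complex.ofReal_cos]
      module
    have hsq : ‖q n (e m) - e m‖ ^ 2 = sin ((m : ℝ) * π / (2 * n)) ^ 2 := by
      rw [hd, norm_vv_sq _ _ _ _ (by omega), ← hθeq]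
      linear_combination (cos (θ n k) ^ 2 - 1) * sin_sq_add_cos_sq (θ n k)
    nlinarith [norm_nonneg (q n (e m) - e m), abs_nonneg (sin ((m : ℝ) * π / (2 * n))),
      sq_abs (sin ((m : ℝ) * π / (2 * n)))]
  · set k := (m + n).toNat with hk
    have hθeq : θ n k = π / 2 + (m : ℝ) * π / (2 * n) := by
      have hne : (n : ℝ) ≠ 0 := Nat.cast_ne_zero.mpr (by omega)
      rw [θ]
      have h1 : ((k : ℕ) : ℝ) = (m : ℝ) + (n : ℝ) := by
        exact_mod_cast congrArg (Int.cast : ℤ → ℝ) (by omega : (k : ℤ) = m + n)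
      rw [h1]
      field_simp
      ring
    have hcos : cos (θ n k) = -sin ((m : ℝ) * π / (2 * n)) := by
      rw [hθeq, cos_add, cos_pi_div_two, sin_pi_div_two]
      ring
    have hd : q n (e m) - e m
        = ((sin (θ n k) * cos (θ n k) : ℝ) : ℂ) • e (m + n) + ((sin (θ n k) ^ 2 - 1 : ℝ) : ℂ) • e m := by
      rw [q_e_repr_neg m n hm (by omega), f_def,
        show ((k : ℕ) : ℤ) = m + n from by omega,
        show (m : ℤ) + n - n = m from by ring]
      push_cast [-Complex.ofReal_sin, -Complex.ofReal_cos]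
      module
    have hsq : ‖q n (e m) - e m‖ ^ 2 = sin ((m : ℝ) * π / (2 * n)) ^ 2 := by
      rw [hd, norm_vv_sq _ _ _ _ (by omega),
        show sin ((m : ℝ) * π / (2 * n)) = -cos (θ n k) from by rw [hcos]; ring]
      linear_combination (sin (θ n k) ^ 2 - 1) * sin_sq_add_cos_sq (θ n k)
    nlinarith [norm_nonneg (q n (e m) - e m), abs_nonneg (sin ((m : ℝ) * π / (2 * n))),
      sq_abs (sin ((m : ℝ) * π / (2 * n)))]

lemma tendsto_aux (c : ℝ) : Tendsto (fun n : ℕ => |sin (c * π / (2 * n))|) atTop (𝓝 0) := by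
  have h0 : Tendsto (fun n : ℕ => c * π / (2 * n)) atTop (𝓝 0) := by
    have := tendsto_const_div_atTop_nhds_zero_nat (c * π / 2)
    refine this.congr fun n => ?_
    ring
  have h1 : Tendsto (fun n : ℕ => |sin (c * π / (2 * n))|) atTop (𝓝 (|sin 0|)) :=
    ((continuous_abs.comp continuous_sin).tendsto 0).comp h0
  simpa using h1

lemma tendsto_q_e (m : ℤ) : Tendsto (fun n => q n (e m)) atTop (𝓝 (e m)) := by
  rw [← tendsto_sub_nhds_zero_iff]
  refine squeeze_zero_norm' ?_ (tendsto_aux (m : ℝ))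
  filter_upwards [eventually_ge_atTop (m.natAbs + 1)] with n hn
  exact q_e_dist m n (by omega)

lemma tendsto_q (x : ℋ) : Tendsto (fun n => q n x) atTop (𝓝 x) := by
  rw [Metric.tendsto_atTop]
  intro ε hε
  have hsum : HasSum (fun i : ℤ => lp.single 2 i (x i)) x :=
    lp.hasSum_single (by norm_num) x
  have hex : ∃ s : Finset ℤ, dist (∑ i ∈ s, lp.single 2 i (x i)) x < ε / 3 := by
    have := (Metric.tendsto_nhds.mp hsum) (ε / 3) (by linarith)
    exact this.exists
  obtain ⟨s, hs⟩ := hex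
  set y : ℋ := ∑ i ∈ s, lp.single 2 i (x i) with hy
  have hy2 : y = ∑ i ∈ s, x i • e i := by
    rw [hy]
    refine Finset.sum_congr rfl fun i _ => ?_
    rw [e_single]
    rw [← lp.single_smul]
    norm_num
  have hqy : Tendsto (fun n => q n y) atTop (𝓝 y) := by
    rw [hy2]
    have : Tendsto (fun n => ∑ i ∈ s, x i • q n (e i)) atTop (𝓝 (∑ i ∈ s, x i • e i)) :=
      tendsto_finset_sum s fun i _ => (tendsto_q_e i).const_smul (x i)
    refine this.congr fun n => ?_
    rw [map_sum]
    exact Finset.sum_congr rfl fun i _ => (map_smul (q n) (x i) (e i)).symm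
  obtain ⟨N, hN⟩ := (Metric.tendsto_atTop.mp hqy) (ε / 3) (by linarith)
  refine ⟨N, fun n hn => ?_⟩
  have h1 : dist (q n x) x ≤ dist (q n x) (q n y) + dist (q n y) y + dist y x :=
    dist_triangle4 _ _ _ _
  have h2 : dist (q n x) (q n y) ≤ dist x y := by
    rw [dist_eq_norm, dist_eq_norm, ← map_sub]
    exact q_norm_le n (x - y)
  have h3 := hN n hn
  have h4 : dist y x < ε / 3 := hs
  have h5 : dist x y < ε / 3 := by rw [dist_comm]; exact h4
  linarith


end BSQD

open BSQD in
/-- Let `u` be the bilateral shift on `ℓ²(ℤ)`, i.e. the bounded operator with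
`(u f)(k) = f(k − 1)`.  Then there is a sequence `(q_j)` of finite-rank orthogonal
projections on `ℓ²(ℤ)` converging to the identity in the strong operator topology and
satisfying `‖u·q_j − q_j·u‖ → 0`. -/
theorem bilateral_shift_quasidiagonal
    (u : lp (fun _ : ℤ => ℂ) 2 →L[ℂ] lp (fun _ : ℤ => ℂ) 2)
    (hu : ∀ (f : lp (fun _ : ℤ => ℂ) 2) (k : ℤ), (u f : ∀ _ : ℤ, ℂ) k = f (k - 1)) :
    ∃ q : ℕ → (lp (fun _ : ℤ => ℂ) 2 →L[ℂ] lp (fun _ : ℤ => ℂ) 2),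
      (∀ j, IsSelfAdjoint (q j) ∧ IsIdempotentElem (q j) ∧
        FiniteDimensional ℂ (LinearMap.range (q j).toLinearMap)) ∧
      (∀ f : lp (fun _ : ℤ => ℂ) 2, Tendsto (fun j => q j f) atTop (𝓝 f)) ∧
      Tendsto (fun j => ‖u * q j - q j * u‖) atTop (𝓝 (0 : ℝ)) := by
  refine ⟨fun j => q (j + 1), fun j => ⟨q_selfAdjoint _, q_idem _, q_finiteDimensional _⟩,
    fun x => ?_, ?_⟩
  · exact (tendsto_q x).comp (tendsto_add_atTop_nat 1)
  · have h0 : Tendsto (fun j : ℕ => π / (2 * ((j + 1 : ℕ) : ℝ))) atTop (𝓝 0) := by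
      have := (tendsto_const_div_atTop_nhds_zero_nat (π / 2)).comp (tendsto_add_atTop_nat 1)
      refine this.congr fun j => ?_
      simp only [Function.comp]
      ring
    have h1 : Tendsto (fun j : ℕ => 2 * sin (π / (2 * ((j + 1 : ℕ) : ℝ)))) atTop (𝓝 0) := by
      have h2 := (Real.continuous_sin.tendsto 0).comp h0
      simp only [Function.comp_def, Real.sin_zero] at h2
      simpa using h2.const_mul 2
    exact squeeze_zero (fun j => norm_nonneg _)
      (fun j => comm_bound u hu (j + 1) (by omega)) h1


end
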